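/- Define the shift map S on simple string diagrams by S(v¹,…,v^{k-1}) = (1, v¹,…,v^{k-1}) (prepending ℓ₁ = 1). Then for any (k-1)-dimensional simple string diagram D, any k-globular set X, and 0-cells x, y of X, there is a natural bijection between globular maps from the realization of D to the (k-1)-globular set Hom_X(x,y) and globular maps from the realization of S(D) to X sending the two 0-cells of the realization of S(D) to x and y respectively. -/
import Mathlib


/-- A simple k-string diagram. -/
structure SSD (k : ℕ) where
  ℓ : ℕ → ℕ
  base : ℓ 0 = 1
  high : ∀ i, k < i → ℓ i = 0
  v : ∀ i, Fin (ℓ (i + 1)) → Fin (ℓ i)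

/-- An n-globular set. -/
structure GSet (n : ℕ) where
  cells : ℕ → Type
  src : ∀ k, cells (k + 1) → cells k
  tgt : ∀ k, cells (k + 1) → cells k
  glob_ss : ∀ k (x : cells (k + 2)), src k (src (k + 1) x) = src k (tgt (k + 1) x)
  glob_ts : ∀ k (x : cells (k + 2)), tgt k (src (k + 1) x) = tgt k (tgt (k + 1) x)
  trunc : ∀ k, n < k → IsEmpty (cells k)

/-- Iterated source down to dimension 0. -/
def toSrc0 {n : ℕ} (X : GSet n) : ∀ m, X.cells m → X.cells 0
  | 0, z => z
  | m + 1, z => toSrc0 X m (X.src m z)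

/-- Iterated target down to dimension 0. -/
def toTgt0 {n : ℕ} (X : GSet n) : ∀ m, X.cells m → X.cells 0
  | 0, z => z
  | m + 1, z => toTgt0 X m (X.tgt m z)

/-- The shift `S(D) = (1, v¹, …, v^{k-1})` of a simple string diagram: prepend a single
cell at level 1 (shifting all levels up by one). -/
def shift {k : ℕ} (D : SSD k) : SSD (k + 1) where
  ℓ := fun m => match m with
    | 0 => 1
    | m + 1 => D.ℓ m
  base := rfl
  high := by
    intro i hi
    match i with
    | 0 => omega
    | m + 1 => exact D.high m (by omega)
  v := fun m => match m with
    | 0 => fun _ => ⟨0, Nat.one_pos⟩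
    | m + 1 => D.v m

/-- A labeling of a simple string diagram `D` in a globular set `X`: a choice of cell
for each node of `D`, whose source is the cell below it if it is the first node in its
fibre, and the target of the previous node in its fibre otherwise. -/
def IsLabeling {n k : ℕ} (X : GSet n) (D : SSD k)
    (x : ∀ m, Fin (D.ℓ m) → X.cells m) : Prop :=
  (∀ m (i : Fin (D.ℓ (m + 1))), (∀ j, D.v m j = D.v m i → i ≤ j) →
    X.src m (x (m + 1) i) = x m (D.v m i)) ∧
  (∀ m (i j : Fin (D.ℓ (m + 1))), D.v m i = D.v m j → i < j →
    (∀ l, D.v m l = D.v m i → l ≤ i ∨ j ≤ l) →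
    X.src m (x (m + 1) j) = X.tgt m (x (m + 1) i))

lemma toSrc0_src_tgt {n : ℕ} (X : GSet n) (m : ℕ) (z : X.cells (m + 2)) :
    toSrc0 X (m + 1) (X.src (m + 1) z) = toSrc0 X (m + 1) (X.tgt (m + 1) z) := by
  show toSrc0 X m (X.src m (X.src (m+1) z)) = toSrc0 X m (X.src m (X.tgt (m+1) z))
  rw [X.glob_ss]

lemma toTgt0_src_tgt {n : ℕ} (X : GSet n) (m : ℕ) (z : X.cells (m + 2)) :
    toTgt0 X (m + 1) (X.src (m + 1) z) = toTgt0 X (m + 1) (X.tgt (m + 1) z) := by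
  show toTgt0 X m (X.tgt m (X.src (m+1) z)) = toTgt0 X m (X.tgt m (X.tgt (m+1) z))
  rw [X.glob_ts]

lemma boundary {k : ℕ} (D : SSD k) (X : GSet (k + 1))
    (x : ∀ m, Fin ((shift D).ℓ m) → X.cells m)
    (h : IsLabeling X (shift D) x) (a b : X.cells 0)
    (ha : ∀ i0 : Fin ((shift D).ℓ 0), x 0 i0 = a)
    (hb : ∀ i1 : Fin ((shift D).ℓ 1), X.tgt 0 (x 1 i1) = b) :
    ∀ m (i : Fin ((shift D).ℓ (m + 1))),
      toSrc0 X (m + 1) (x (m + 1) i) = a ∧ toTgt0 X (m + 1) (x (m + 1) i) = b := by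
  intro m
  induction m with
  | zero =>
    intro i
    have hv : ∀ j : Fin ((shift D).ℓ 1), (shift D).v 0 j = (shift D).v 0 i → i ≤ j := by
      intro j _
      have h1 : (i : ℕ) < D.ℓ 0 := i.isLt
      have h2 : (j : ℕ) < D.ℓ 0 := j.isLt
      have h3 := D.base
      rw [Fin.le_def]
      omega
    have h1 := h.1 0 i hv
    refine ⟨?_, ?_⟩
    · show X.src 0 (x 1 i) = a
      rw [h1, ha]
    · show X.tgt 0 (x 1 i) = b
      exact hb i
  | succ m ih =>
    have main : ∀ N (i : Fin ((shift D).ℓ (m + 2))), (i : ℕ) < N →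
        toSrc0 X (m + 2) (x (m + 2) i) = a ∧ toTgt0 X (m + 2) (x (m + 2) i) = b := by
      intro N
      induction N with
      | zero => intro i hi; omega
      | succ N ihN =>
        intro i hiN
        have ih2 : ∀ j : Fin ((shift D).ℓ (m + 2)), j < i →
            toSrc0 X (m + 2) (x (m + 2) j) = a ∧ toTgt0 X (m + 2) (x (m + 2) j) = b := by
          intro j hj
          have := Fin.lt_def.mp hj
          exact ihN j (by omega)
        by_cases hmin : ∀ j, (shift D).v (m+1) j = (shift D).v (m+1) i → i ≤ j
        · have h1 := h.1 (m+1) i hmin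
          refine ⟨?_, ?_⟩
          · show toSrc0 X (m+1) (X.src (m+1) (x (m+2) i)) = a
            rw [h1]
            exact (ih _).1
          · show toTgt0 X (m+1) (X.tgt (m+1) (x (m+2) i)) = b
            rw [← toTgt0_src_tgt, h1]
            exact (ih _).2
        · push_neg at hmin
          obtain ⟨j0, hj0v, hj0lt⟩ := hmin
          classical
          let s := Finset.univ.filter
            (fun l => (shift D).v (m+1) l = (shift D).v (m+1) i ∧ l < i)
          have hne : s.Nonempty :=
            ⟨j0, Finset.mem_filter.mpr ⟨Finset.mem_univ _, hj0v, hj0lt⟩⟩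
          obtain ⟨-, hjv, hjlt⟩ := Finset.mem_filter.mp (s.max'_mem hne)
          set j := s.max' hne with hj
          have hmax : ∀ l, (shift D).v (m+1) l = (shift D).v (m+1) j → l ≤ j ∨ i ≤ l := by
            intro l hl
            by_cases hli : l < i
            · left
              exact s.le_max' l (Finset.mem_filter.mpr
                ⟨Finset.mem_univ _, hl.trans hjv, hli⟩)
            · right
              exact le_of_not_gt hli
          have h2 := h.2 (m+1) j i hjv hjlt hmax
          refine ⟨?_, ?_⟩
          · show toSrc0 X (m+1) (X.src (m+1) (x (m+2) i)) = a
            rw [h2, ← toSrc0_src_tgt]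
            exact (ih2 j hjlt).1
          · show toTgt0 X (m+1) (X.tgt (m+1) (x (m+2) i)) = b
            rw [← toTgt0_src_tgt, h2]
            exact (ih2 j hjlt).2
    intro i
    exact main ((i : ℕ) + 1) i (Nat.lt_succ_self _)

/-- Labelings of a (k-1)-dimensional simple string diagram `D` in the hom globular set
`Hom_X(a,b)` (cells: cells of `X` one dimension higher with iterated source `a` and
iterated target `b`) are in natural bijection with labelings of the shifted diagram
`S(D)` in `X` sending its two 0-cells to `a` and `b`. -/
theorem stmt18 (k : ℕ) (D : SSD k) (X : GSet (k + 1)) (a b : X.cells 0) :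
    ∃ e : { y : ∀ m, Fin (D.ℓ m) → X.cells (m + 1) //
        (∀ m (i : Fin (D.ℓ m)),
          toSrc0 X (m + 1) (y m i) = a ∧ toTgt0 X (m + 1) (y m i) = b) ∧
        (∀ m (i : Fin (D.ℓ (m + 1))), (∀ j, D.v m j = D.v m i → i ≤ j) →
          X.src (m + 1) (y (m + 1) i) = y m (D.v m i)) ∧
        (∀ m (i j : Fin (D.ℓ (m + 1))), D.v m i = D.v m j → i < j →
          (∀ l, D.v m l = D.v m i → l ≤ i ∨ j ≤ l) →
          X.src (m + 1) (y (m + 1) j) = X.tgt (m + 1) (y (m + 1) i)) } ≃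
      { x : ∀ m, Fin ((shift D).ℓ m) → X.cells m //
        IsLabeling X (shift D) x ∧
        (∀ i0 : Fin ((shift D).ℓ 0), x 0 i0 = a) ∧
        (∀ i1 : Fin ((shift D).ℓ 1), X.tgt 0 (x 1 i1) = b) },
      ∀ l m (i : Fin (D.ℓ m)) (i' : Fin ((shift D).ℓ (m + 1))),
        (i : ℕ) = (i' : ℕ) → (e l).val (m + 1) i' = l.val m i := by
  refine ⟨{
    toFun := fun l => ⟨fun m => match m with
      | 0 => fun _ => a
      | m + 1 => l.val m, ?_, ?_, ?_⟩
    invFun := fun p => ⟨fun m => p.val (m + 1), ?_, ?_, ?_⟩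
    left_inv := ?_
    right_inv := ?_ }, ?_⟩
  · refine ⟨?_, ?_⟩
    · intro m i hmin
      match m with
      | 0 => exact (l.prop.1 0 i).1
      | m + 1 => exact l.prop.2.1 m i hmin
    · intro m i j hv hlt hmax
      match m with
      | 0 =>
        exfalso
        have h1 : (i : ℕ) < D.ℓ 0 := i.isLt
        have h2 : (j : ℕ) < D.ℓ 0 := j.isLt
        have h3 := D.base
        rw [Fin.lt_def] at hlt
        omega
      | m + 1 => exact l.prop.2.2 m i j hv hlt hmax
  · intro i0; rfl
  · intro i1; exact (l.prop.1 0 i1).2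
  · exact fun m i => boundary D X p.val p.prop.1 a b p.prop.2.1 p.prop.2.2 m i
  · exact fun m i hmin => p.prop.1.1 (m + 1) i hmin
  · exact fun m i j hv hlt hmax => p.prop.1.2 (m + 1) i j hv hlt hmax
  · intro l
    apply Subtype.ext
    rfl
  · intro p
    apply Subtype.ext
    funext m
    match m with
    | 0 => funext i0; exact (p.prop.2.1 i0).symm
    | m + 1 => rfl
  · intro l m i i' h
    exact congrArg (l.val m) (Fin.ext h.symm)
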